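/- arXiv:1405.2545 — 2 statements merged into one kernel-verified Lean document; each statement's English description precedes it below -/
import Mathlib

section
/- Let W and U be finite-dimensional complex vector spaces with 2·dim W ≥ dim U + 4. Then for every alternating bilinear map B : W × W → U there exist linearly independent vectors s₁, s₂ ∈ W with B(s₁, s₂) = 0. -/
open MvPolynomial

namespace Stmt4



variable {n m : ℕ}

noncomputable abbrev Av (n : ℕ) := MvPolynomial (Fin n ⊕ Fin n) ℂ

/-- Plücker coordinate polynomials. -/
noncomputable def q (i j : Fin n) : Av n :=
  X (Sum.inl i) * X (Sum.inr j) - X (Sum.inl j) * X (Sum.inr i)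

/-- Monomials in the Plücker coordinates. -/
noncomputable def qprod (ν : Fin n × Fin n → ℕ) : Av n :=
  ∏ ij : Fin n × Fin n, q ij.1 ij.2 ^ ν ij

/-- Weight of a multi-exponent. -/
def wt {ι : Type*} [Fintype ι] (ν : ι → ℕ) : ℕ := ∑ i, ν i

lemma q_isHomogeneous (i j : Fin n) : (q i j).IsHomogeneous 2 := by
  apply MvPolynomial.IsHomogeneous.sub
  · exact (isHomogeneous_X ℂ _).mul (isHomogeneous_X ℂ _)
  · exact (isHomogeneous_X ℂ _).mul (isHomogeneous_X ℂ _)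

lemma qprod_isHomogeneous (ν : Fin n × Fin n → ℕ) : (qprod ν).IsHomogeneous (2 * wt ν) := by
  have : (2 : ℕ) * wt ν = ∑ ij : Fin n × Fin n, 2 * ν ij := by
    rw [wt, Finset.mul_sum]
  rw [this, qprod]
  exact MvPolynomial.IsHomogeneous.prod _ _ _ fun ij _ => (q_isHomogeneous ij.1 ij.2).pow (ν ij)

lemma qprod_add (ν₁ ν₂ : Fin n × Fin n → ℕ) : qprod (ν₁ + ν₂) = qprod ν₁ * qprod ν₂ := by
  rw [qprod, qprod, qprod, ← Finset.prod_mul_distrib]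
  exact Finset.prod_congr rfl fun ij _ => by rw [Pi.add_apply, pow_add]

/-- The quadrics given by coefficients `c`. -/
noncomputable def pp (c : Fin m → Fin n → Fin n → ℂ) (k : Fin m) : Av n :=
  ∑ ij : Fin n × Fin n, C (c k ij.1 ij.2) * (X (Sum.inl ij.1) * X (Sum.inr ij.2))

noncomputable def pprod (c : Fin m → Fin n → Fin n → ℂ) (γ : Fin m → ℕ) : Av n :=
  ∏ k, pp c k ^ γ k

lemma pp_isHomogeneous (c : Fin m → Fin n → Fin n → ℂ) (k : Fin m) :
    (pp c k).IsHomogeneous 2 := by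
  apply MvPolynomial.IsHomogeneous.sum
  intro ij _
  exact ((isHomogeneous_X ℂ _).mul (isHomogeneous_X ℂ _)).C_mul _

lemma pprod_single_mul (c : Fin m → Fin n → Fin n → ℂ) (γ : Fin m → ℕ) (k : Fin m) :
    pp c k * pprod c γ = pprod c (fun k' => γ k' + if k' = k then 1 else 0) := by
  have : (pprod c (fun k' => γ k' + if k' = k then 1 else 0)) =
      (∏ k', pp c k' ^ γ k') * ∏ k', pp c k' ^ (if k' = k then 1 else 0) := by
    rw [pprod, ← Finset.prod_mul_distrib]
    exact Finset.prod_congr rfl fun k' _ => by rw [pow_add]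
  rw [this, pprod]
  have h2 : ∀ k' : Fin m, pp c k' ^ (if k' = k then 1 else 0) = if k' = k then pp c k' else 1 := by
    intro k'; split <;> simp
  rw [Finset.prod_congr rfl fun k' _ => h2 k', Finset.prod_ite_eq' Finset.univ k (fun k' => pp c k')]
  simp [mul_comm]

/-- evaluation of q at a point built from s,t -/
lemma eval_q (s t : Fin n → ℂ) (i j : Fin n) :
    eval (Sum.elim s t) (q i j) = s i * t j - s j * t i := by
  simp [q]


noncomputable abbrev Tv (n : ℕ) := MvPolynomial (Fin n × Fin n) ℂ
noncomputable def eps : Tv n →ₐ[ℂ] Av n := aeval (fun ij => q ij.1 ij.2)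
noncomputable def Lam (c : Fin m → Fin n → Fin n → ℂ) (k : Fin m) : Tv n :=
  C (2⁻¹ : ℂ) * ∑ ij : Fin n × Fin n, C (c k ij.1 ij.2) * X ij

lemma sum_swap_pp {M : Type*} [AddCommMonoid M] (f : Fin n → Fin n → M) :
    ∑ ij : Fin n × Fin n, f ij.1 ij.2 = ∑ ij : Fin n × Fin n, f ij.2 ij.1 :=
  Fintype.sum_equiv (Equiv.prodComm (Fin n) (Fin n)) _ _ (fun ij => rfl)

lemma eps_Lam (c : Fin m → Fin n → Fin n → ℂ) (hc : ∀ k i j, c k j i = - c k i j) (k : Fin m) :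
    eps (Lam c k) = pp c k := by
  have h1 : eps (Lam c k) = C (2⁻¹:ℂ) * ∑ ij : Fin n × Fin n, C (c k ij.1 ij.2) * q ij.1 ij.2 := by
    rw [Lam, map_mul, map_sum]
    congr 1
    · simp [eps, algebraMap_eq]
    · exact Finset.sum_congr rfl fun ij _ => by simp [eps, algebraMap_eq]
  rw [h1]
  have h2 : ∑ ij : Fin n × Fin n, C (c k ij.1 ij.2) * q ij.1 ij.2
      = pp c k + pp c k := by
    have e1 : ∀ ij : Fin n × Fin n, C (c k ij.1 ij.2) * q ij.1 ij.2 =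
        C (c k ij.1 ij.2) * (X (Sum.inl ij.1) * X (Sum.inr ij.2))
        - C (c k ij.1 ij.2) * (X (Sum.inl ij.2) * X (Sum.inr ij.1)) := by
      intro ij; rw [q]; ring
    rw [Finset.sum_congr rfl fun ij _ => e1 ij, Finset.sum_sub_distrib]
    have e2 : ∑ ij : Fin n × Fin n, C (c k ij.1 ij.2) * (X (Sum.inl ij.2) * X (Sum.inr ij.1))
        = - pp c k := by
      rw [sum_swap_pp (fun a b => C (c k a b) * (X (Sum.inl b) * X (Sum.inr a) : Av n))]
      rw [pp, ← Finset.sum_neg_distrib]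
      exact Finset.sum_congr rfl fun ij _ => by rw [hc k ij.1 ij.2]; simp
    rw [e2, pp]; ring
  rw [h2]
  have h3 : (pp c k + pp c k) = C (2:ℂ) * pp c k := by
    have : (C (2:ℂ) : Av n) = 2 := by simp [map_ofNat]
    rw [this]; ring
  rw [h3, ← mul_assoc, ← map_mul]
  norm_num

noncomputable def Jd (c : Fin m → Fin n → Fin n → ℂ) : Ideal (Tv n) :=
  Ideal.span (Set.range (Lam c)) ⊔ RingHom.ker (eps (n := n)).toRingHom

lemma diag_mem_ker (i : Fin n) : (X (i,i) : Tv n) ∈ RingHom.ker (eps (n := n)).toRingHom := by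
  simp [RingHom.mem_ker, eps, q]

lemma skew_mem_ker (i j : Fin n) :
    (X (i,j) + X (j,i) : Tv n) ∈ RingHom.ker (eps (n := n)).toRingHom := by
  simp only [RingHom.mem_ker, AlgHom.toRingHom_eq_coe, RingHom.coe_coe, map_add]
  simp only [eps, aeval_X, q]
  ring

lemma pluecker_mem_ker (i j k l : Fin n) :
    (X (i,j) * X (k,l) - X (i,k) * X (j,l) + X (i,l) * X (j,k) : Tv n)
      ∈ RingHom.ker (eps (n := n)).toRingHom := by
  simp only [RingHom.mem_ker, AlgHom.toRingHom_eq_coe, RingHom.coe_coe, map_add, map_sub, map_mul]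
  simp only [eps, aeval_X, q]
  ring


lemma zeroLocus_Jd_subset (c : Fin m → Fin n → Fin n → ℂ) (hc : ∀ k i j, c k j i = - c k i j)
    (hng : ∀ s t : Fin n → ℂ,
      (∀ k, ∑ ij : Fin n × Fin n, c k ij.1 ij.2 * (s ij.1 * t ij.2) = 0) →
      ∀ i j, s i * t j - s j * t i = 0) :
    ∀ ω ∈ zeroLocus ℂ (Jd c), ω = 0 := by
  intro ω hω
  by_contra hne
  obtain ⟨cd, hcd⟩ : ∃ cd, ω cd ≠ 0 := by
    by_contra h; push_neg at h; exact hne (funext fun cd => h cd)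
  have hev : ∀ f ∈ Jd c, eval ω f = 0 := fun f hf => mem_zeroLocus_iff.mp hω f hf
  have hker : ∀ f ∈ RingHom.ker (eps (n := n)).toRingHom, eval ω f = 0 :=
    fun f hf => hev f (Ideal.mem_sup_right hf)
  have hskew : ∀ i j : Fin n, ω (j,i) = - ω (i,j) := by
    intro i j
    have h := hker _ (skew_mem_ker i j)
    simp only [map_add, eval_X] at h
    linear_combination h
  have hpl : ∀ i j k l : Fin n,
      ω (i,j) * ω (k,l) - ω (i,k) * ω (j,l) + ω (i,l) * ω (j,k) = 0 := by
    intro i j k l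
    have h := hker _ (pluecker_mem_ker i j k l)
    simpa using h
  have hlam : ∀ k, ∑ ij : Fin n × Fin n, c k ij.1 ij.2 * ω ij = 0 := by
    intro k
    have h := hev _ (Ideal.mem_sup_left (Ideal.subset_span ⟨k, rfl⟩))
    rw [Lam] at h
    simp only [eval_mul, map_sum, eval_C, eval_X] at h
    have h2 : (2⁻¹ : ℂ) ≠ 0 := by norm_num
    rcases mul_eq_zero.mp h with h | h
    · exact absurd h h2
    · exact h
  set c₀ := cd.1
  set d₀ := cd.2
  have hcd' : ω (c₀, d₀) ≠ 0 := by simpa using hcd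
  set s : Fin n → ℂ := fun i => ω (i, d₀) with hs
  set t : Fin n → ℂ := fun j => ω (c₀, j) / ω (c₀, d₀) with ht
  have hminor : ∀ i j, s i * t j - s j * t i = ω (i,j) := by
    intro i j
    have key : ω (i, d₀) * ω (c₀, j) - ω (j, d₀) * ω (c₀, i) = ω (i,j) * ω (c₀,d₀) := by
      linear_combination (-1) * hpl i j c₀ d₀ + ω (i,d₀) * hskew j c₀ - ω (j,d₀) * hskew i c₀
    rw [hs, ht]
    field_simp
    linear_combination key
  have hsum : ∀ k, ∑ ij : Fin n × Fin n, c k ij.1 ij.2 * (s ij.1 * t ij.2) = 0 := by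
    intro k
    have hB : ∑ ij : Fin n × Fin n, c k ij.1 ij.2 * (s ij.2 * t ij.1)
        = - ∑ ij : Fin n × Fin n, c k ij.1 ij.2 * (s ij.1 * t ij.2) := by
      rw [sum_swap_pp (fun a b => c k a b * (s b * t a))]
      rw [← Finset.sum_neg_distrib]
      exact Finset.sum_congr rfl fun ij _ => by rw [hc k ij.1 ij.2]; ring
    have hAB : ∑ ij : Fin n × Fin n, c k ij.1 ij.2 * (s ij.1 * t ij.2)
        - ∑ ij : Fin n × Fin n, c k ij.1 ij.2 * (s ij.2 * t ij.1)
        = ∑ ij : Fin n × Fin n, c k ij.1 ij.2 * ω ij := by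
      rw [← Finset.sum_sub_distrib]
      refine Finset.sum_congr rfl fun ij _ => ?_
      have := hminor ij.1 ij.2
      ring_nf
      linear_combination c k ij.1 ij.2 * this
    rw [hB] at hAB
    rw [hlam k] at hAB
    have : (2:ℂ) * ∑ ij : Fin n × Fin n, c k ij.1 ij.2 * (s ij.1 * t ij.2) = 0 := by
      linear_combination hAB
    have h2 : (2:ℂ) ≠ 0 := by norm_num
    rcases mul_eq_zero.mp this with h | h
    · exact absurd h h2
    · exact h
  have := hng s t hsum c₀ d₀
  rw [hminor c₀ d₀] at this
  exact hcd' this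

lemma exists_uniform_pow (c : Fin m → Fin n → Fin n → ℂ)
    (hzero : ∀ ω ∈ zeroLocus ℂ (Jd c), ω = 0) :
    ∃ N, 1 ≤ N ∧ ∀ ij : Fin n × Fin n, (X ij : Tv n) ^ N ∈ Jd c := by
  have hrad : ∀ ij : Fin n × Fin n, (X ij : Tv n) ∈ (Jd c).radical := by
    intro ij
    rw [← vanishingIdeal_zeroLocus_eq_radical (K := ℂ), mem_vanishingIdeal_iff]
    intro x hx
    rw [hzero x hx]
    simp
  choose f hf using fun ij => Ideal.mem_radical_iff.mp (hrad ij)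
  refine ⟨Finset.univ.sup f + 1, le_add_self, fun ij => ?_⟩
  have hle : f ij ≤ Finset.univ.sup f := Finset.le_sup (Finset.mem_univ ij)
  have : (X ij : Tv n) ^ (Finset.univ.sup f + 1)
      = X ij ^ (Finset.univ.sup f + 1 - f ij) * X ij ^ f ij := by
    rw [← pow_add]; congr 1; omega
  rw [this]
  exact Ideal.mul_mem_left _ _ (hf ij)


/-- Everything in the range of `eps` is a ℂ-combination of `qprod`s. -/
lemma eps_mem_span (f : Tv n) :
    eps f ∈ Submodule.span ℂ {x : Av n | ∃ δ, x = qprod δ} := by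
  rw [eps, aeval_def, eval₂_eq]
  apply Submodule.sum_mem
  intro d _
  have hq : ∏ ij ∈ d.support, q ij.1 ij.2 ^ d ij = qprod ⇑d := by
    rw [qprod]
    refine Finset.prod_subset (Finset.subset_univ _) ?_
    intro ij _ hij
    rw [Finsupp.notMem_support_iff.mp hij, pow_zero]
  rw [hq]
  have : (algebraMap ℂ (Av n)) (coeff d f) * qprod ⇑d = (coeff d f) • qprod ⇑d := by
    rw [algebraMap_eq, smul_eq_C_mul]
  rw [this]
  exact Submodule.smul_mem _ _ (Submodule.subset_span ⟨⇑d, rfl⟩)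

lemma homComp_of_isHomogeneous {f : Av n} {h d : ℕ} (hf : f.IsHomogeneous h) :
    homogeneousComponent d f = if h = d then f else 0 := by
  split_ifs with hd
  · subst hd
    ext u
    rw [coeff_homogeneousComponent]
    split_ifs with hu
    · rfl
    · exact (hf.coeff_eq_zero hu).symm
  · ext u
    rw [coeff_homogeneousComponent, coeff_zero]
    split_ifs with hu
    · exact hf.coeff_eq_zero (by rw [hu]; exact fun hh => hd hh.symm)
    · rfl

/-- Extracting the top homogeneous component from a product with a degree-2 form. -/
lemma homComp_mul_pp (c : Fin m → Fin n → Fin n → ℂ) (k : Fin m) (g : Av n) (M : ℕ) :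
    homogeneousComponent (2*M+2) (g * pp c k)
      = homogeneousComponent (2*M) g * pp c k := by
  classical
  have hsum : ∑ i ∈ Finset.range (g.totalDegree + 2*M + 3), homogeneousComponent i g = g := by
    have hsub : ∑ i ∈ Finset.range (g.totalDegree + 1), homogeneousComponent i g
        = ∑ i ∈ Finset.range (g.totalDegree + 2*M + 3), homogeneousComponent i g :=
      Finset.sum_subset (Finset.range_subset_range.mpr (by omega))
        (fun i _ hi => homogeneousComponent_eq_zero i g
          (by simp only [Finset.mem_range, not_lt] at hi; omega))
    rw [← hsub, sum_homogeneousComponent]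
  conv_lhs => rw [← hsum]
  rw [Finset.sum_mul, map_sum]
  have hterm : ∀ i ∈ Finset.range (g.totalDegree + 2*M + 3),
      homogeneousComponent (2*M+2) (homogeneousComponent i g * pp c k)
      = if i = 2*M then homogeneousComponent i g * pp c k else 0 := by
    intro i _
    have hh : (homogeneousComponent i g * pp c k).IsHomogeneous (i + 2) :=
      (homogeneousComponent_isHomogeneous i g).mul (pp_isHomogeneous c k)
    rw [homComp_of_isHomogeneous hh]
    congr 1
    simp only [eq_iff_iff]
    omega
  rw [Finset.sum_congr rfl hterm,
    Finset.sum_ite_eq' (Finset.range (g.totalDegree + 2*M + 3))]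
  have : 2*M ∈ Finset.range (g.totalDegree + 2*M + 3) := by
    simp only [Finset.mem_range]; omega
  rw [if_pos this]

/-- The key identity coming from the Nullstellensatz, in homogeneous degree-matched form. -/
lemma key_identity (c : Fin m → Fin n → Fin n → ℂ) (hc : ∀ k i j, c k j i = - c k i j)
    (hng : ∀ s t : Fin n → ℂ,
      (∀ k, ∑ ij : Fin n × Fin n, c k ij.1 ij.2 * (s ij.1 * t ij.2) = 0) →
      ∀ i j, s i * t j - s j * t i = 0) :
    ∃ M : ℕ, ∀ i j : Fin n, ∃ g : Fin m → Av n,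
      (∀ k, g k ∈ Submodule.span ℂ {x : Av n | ∃ δ, wt δ = M ∧ x = qprod δ}) ∧
      q i j ^ (M+1) = ∑ k, g k * pp c k := by
  obtain ⟨N, hN1, hNpow⟩ := exists_uniform_pow c (zeroLocus_Jd_subset c hc hng)
  obtain ⟨M, rfl⟩ : ∃ M, N = M + 1 := ⟨N - 1, by omega⟩
  refine ⟨M, fun i j => ?_⟩
  have hmem := hNpow (i, j)
  rw [Jd] at hmem
  rw [Submodule.mem_sup] at hmem
  obtain ⟨y, hy, z, hz, hyz⟩ := hmem
  rw [Ideal.span, Submodule.mem_span_range_iff_exists_fun] at hy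
  obtain ⟨f, hf⟩ := hy
  -- push to Av
  have heps : q i j ^ (M+1) = ∑ k, eps (f k) * pp c k := by
    have h1 : eps ((X (i,j) : Tv n) ^ (M+1)) = q i j ^ (M+1) := by
      rw [map_pow]; simp [eps]
    have hz0 : eps z = 0 := by simpa [RingHom.mem_ker] using hz
    calc q i j ^ (M+1) = eps ((X (i,j) : Tv n) ^ (M+1)) := h1.symm
      _ = eps y + eps z := by rw [← hyz, map_add]
      _ = eps y := by rw [hz0, add_zero]
      _ = ∑ k, eps (f k) * pp c k := by
          rw [← hf, map_sum]
          exact Finset.sum_congr rfl fun k _ => by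
            rw [smul_eq_mul, map_mul, eps_Lam c hc k]
  -- extract homogeneous components
  refine ⟨fun k => homogeneousComponent (2*M) (eps (f k)), fun k => ?_, ?_⟩
  · have h1 := eps_mem_span (f k)
    have h2 : (homogeneousComponent (2*M) : Av n →ₗ[ℂ] Av n) ''
        {x : Av n | ∃ δ, x = qprod δ} ⊆
        ↑(Submodule.span ℂ {x : Av n | ∃ δ, wt δ = M ∧ x = qprod δ}) := by
      rintro _ ⟨x, ⟨δ, rfl⟩, rfl⟩
      simp only [LinearMap.coe_mk, SetLike.mem_coe]
      rw [homComp_of_isHomogeneous (qprod_isHomogeneous δ)]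
      split_ifs with hδ
      · exact Submodule.subset_span ⟨δ, by omega, rfl⟩
      · exact Submodule.zero_mem _
    have h3 := Submodule.image_span_subset_span
      (homogeneousComponent (2*M) : Av n →ₗ[ℂ] Av n) {x : Av n | ∃ δ, x = qprod δ}
    have h4 : homogeneousComponent (2*M) (eps (f k)) ∈
        Submodule.map (homogeneousComponent (2*M) : Av n →ₗ[ℂ] Av n)
          (Submodule.span ℂ {x : Av n | ∃ δ, x = qprod δ}) :=
      Submodule.mem_map_of_mem h1
    rw [Submodule.map_span] at h4
    exact (Submodule.span_le.mpr h2) h4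
  · have h5 : homogeneousComponent (2*M+2) (q i j ^ (M+1)) = q i j ^ (M+1) := by
      rw [homComp_of_isHomogeneous ((q_isHomogeneous i j).pow (M+1))]
      rw [if_pos (by omega)]
    calc q i j ^ (M+1) = homogeneousComponent (2*M+2) (q i j ^ (M+1)) := h5.symm
      _ = homogeneousComponent (2*M+2) (∑ k, eps (f k) * pp c k) := by rw [heps]
      _ = ∑ k, homogeneousComponent (2*M+2) (eps (f k) * pp c k) := map_sum _ _ _
      _ = ∑ k, homogeneousComponent (2*M) (eps (f k)) * pp c k :=
          Finset.sum_congr rfl fun k _ => homComp_mul_pp c k (eps (f k)) M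

/-- Indicator exponent function. -/
def indF (ij₀ : Fin n × Fin n) (e : ℕ) : Fin n × Fin n → ℕ := fun kl => if kl = ij₀ then e else 0

lemma qprod_indF (ij₀ : Fin n × Fin n) (e : ℕ) : qprod (indF ij₀ e) = q ij₀.1 ij₀.2 ^ e := by
  rw [qprod]
  have h : ∀ kl : Fin n × Fin n, q kl.1 kl.2 ^ (indF ij₀ e kl)
      = if kl = ij₀ then q kl.1 kl.2 ^ e else 1 := by
    intro kl; rw [indF]; split_ifs <;> simp
  rw [Finset.prod_congr rfl fun kl _ => h kl,
    Finset.prod_ite_eq' Finset.univ ij₀ (fun kl => q kl.1 kl.2 ^ e), if_pos (Finset.mem_univ _)]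

lemma wt_indF (ij₀ : Fin n × Fin n) (e : ℕ) : wt (indF ij₀ e) = e := by
  rw [wt]
  have h : ∀ kl : Fin n × Fin n, indF ij₀ e kl = if kl = ij₀ then e else 0 := fun kl => rfl
  rw [Finset.sum_congr rfl fun kl _ => h kl, Finset.sum_ite_eq' Finset.univ ij₀ (fun _ => e),
    if_pos (Finset.mem_univ _)]

lemma wt_add {ι : Type*} [Fintype ι] (f g : ι → ℕ) : wt (f + g) = wt f + wt g := by
  rw [wt, wt, wt, ← Finset.sum_add_distrib]
  rfl

/-- The generating set of the small space. -/
def Ugens (c : Fin m → Fin n → Fin n → ℂ) (N d : ℕ) : Set (Av n) :=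
  {x | ∃ (γ : Fin m → ℕ) (β : Fin n × Fin n → ℕ),
    (∀ ij, β ij < N) ∧ wt γ + wt β ≤ d ∧ x = pprod c γ * qprod β}

lemma wt_zero {ι : Type*} [Fintype ι] : wt (fun _ : ι => 0) = 0 := by simp [wt]

lemma pprod_zero (c : Fin m → Fin n → Fin n → ℂ) : pprod c (fun _ => 0) = 1 := by simp [pprod]

lemma mul_pp_span (c : Fin m → Fin n → Fin n → ℂ) (N d : ℕ) (k : Fin m) {x : Av n}
    (hx : x ∈ Submodule.span ℂ (Ugens c N d)) :
    pp c k * x ∈ Submodule.span ℂ (Ugens c N (d+1)) := by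
  induction hx using Submodule.span_induction with
  | mem y hy =>
      obtain ⟨γ, β, hβ, hwt, rfl⟩ := hy
      rw [← mul_assoc, pprod_single_mul c γ k]
      apply Submodule.subset_span
      refine ⟨_, β, hβ, ?_, rfl⟩
      have : wt (fun k' => γ k' + if k' = k then 1 else 0) = wt γ + 1 := by
        have := wt_add γ (fun k' => if k' = k then 1 else 0)
        rw [show (γ + fun k' => if k' = k then 1 else 0) = (fun k' => γ k' + if k' = k then 1 else 0) from rfl] at this
        rw [this]
        congr 1
        rw [wt, Finset.sum_ite_eq' Finset.univ k (fun _ => 1), if_pos (Finset.mem_univ _)]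
      omega
  | zero => rw [mul_zero]; exact Submodule.zero_mem _
  | add y z _ _ hy hz => rw [mul_add]; exact Submodule.add_mem _ hy hz
  | smul a y _ hy => rw [mul_smul_comm]; exact Submodule.smul_mem _ a hy

/-- Main upper bound: every Plücker monomial of weight ≤ d lies in the small space. -/
lemma qprod_mem_span (c : Fin m → Fin n → Fin n → ℂ) (N M : ℕ) (hNM : N = M + 1)
    (key : ∀ i j : Fin n, ∃ g : Fin m → Av n,
      (∀ k, g k ∈ Submodule.span ℂ {x : Av n | ∃ δ, wt δ = M ∧ x = qprod δ}) ∧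
      q i j ^ N = ∑ k, g k * pp c k) :
    ∀ d : ℕ, ∀ ν : Fin n × Fin n → ℕ, wt ν ≤ d →
      qprod ν ∈ Submodule.span ℂ (Ugens c N d) := by
  intro d
  induction d with
  | zero =>
      intro ν hν
      apply Submodule.subset_span
      refine ⟨fun _ => 0, ν, fun ij => ?_, ?_, by rw [pprod_zero, one_mul]⟩
      · have : ν ij ≤ wt ν := Finset.single_le_sum (f := ν) (fun _ _ => Nat.zero_le _)
          (Finset.mem_univ ij)
        omega
      · rw [wt_zero]; omega
  | succ d ih =>
      intro ν hν
      by_cases hbdd : ∀ ij, ν ij < N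
      · apply Submodule.subset_span
        exact ⟨fun _ => 0, ν, hbdd, by rw [wt_zero]; omega, by rw [pprod_zero, one_mul]⟩
      · push_neg at hbdd
        obtain ⟨ij₀, hij₀⟩ := hbdd
        have hdecomp : ν = indF ij₀ N + fun kl => ν kl - indF ij₀ N kl := by
          funext kl
          simp only [Pi.add_apply, indF]
          split_ifs with h
          · subst h; omega
          · omega
        set ν' : Fin n × Fin n → ℕ := fun kl => ν kl - indF ij₀ N kl with hν'
        have hqd : qprod ν = q ij₀.1 ij₀.2 ^ N * qprod ν' := by
          conv_lhs => rw [hdecomp]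
          rw [qprod_add, qprod_indF]
        have hwtν' : wt ν' + N ≤ d + 1 := by
          have h1 : wt ν = N + wt ν' := by
            conv_lhs => rw [hdecomp]
            rw [wt_add, wt_indF]
          omega
        obtain ⟨g, hg, hkey⟩ := key ij₀.1 ij₀.2
        rw [hqd, hkey, Finset.sum_mul]
        apply Submodule.sum_mem
        intro k _
        have hrw : g k * pp c k * qprod ν' = (LinearMap.mulLeft ℂ (pp c k * qprod ν')) (g k) := by
          simp [LinearMap.mulLeft]; ring
        rw [hrw]
        have himg : ∀ x ∈ {x : Av n | ∃ δ, wt δ = M ∧ x = qprod δ},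
            (LinearMap.mulLeft ℂ (pp c k * qprod ν')) x ∈ Submodule.span ℂ (Ugens c N (d+1)) := by
          rintro x ⟨δ, hδ, rfl⟩
          have h1 : (LinearMap.mulLeft ℂ (pp c k * qprod ν')) (qprod δ)
              = pp c k * qprod (ν' + δ) := by
            simp [LinearMap.mulLeft, qprod_add]; ring
          rw [h1]
          apply mul_pp_span
          apply ih
          rw [wt_add]
          omega
        -- now span induction transporting hg
        have := Submodule.span_induction (p := fun x _ =>
            (LinearMap.mulLeft ℂ (pp c k * qprod ν')) x ∈ Submodule.span ℂ (Ugens c N (d+1)))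
          (fun x hx => himg x hx)
          (by rw [map_zero]; exact Submodule.zero_mem _)
          (fun x y _ _ hx hy => by rw [map_add]; exact Submodule.add_mem _ hx hy)
          (fun a x _ hx => by rw [map_smul]; exact Submodule.smul_mem _ a hx)
          (hg k)
        exact this

/-! ### The independent family -/

lemma qprod_zero' : qprod (fun _ : Fin n × Fin n => 0) = 1 := by simp [qprod]

lemma qprod_sum {ι : Type*} (s : Finset ι) (f : ι → (Fin n × Fin n → ℕ)) :
    qprod (∑ j ∈ s, f j) = ∏ j ∈ s, qprod (f j) := by
  classical
  induction s using Finset.cons_induction with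
  | empty => exact qprod_zero'
  | cons a s ha ih =>
      rw [Finset.sum_cons, Finset.prod_cons, qprod_add, ih]

lemma wt_sum {ι ι' : Type*} [Fintype ι'] (s : Finset ι) (f : ι → (ι' → ℕ)) :
    wt (∑ j ∈ s, f j) = ∑ j ∈ s, wt (f j) := by
  classical
  induction s using Finset.cons_induction with
  | empty => exact wt_zero
  | cons a s ha ih => rw [Finset.sum_cons, Finset.sum_cons, wt_add, ih]

lemma monomial_prod {ι : Type*} (s : Finset ι) (w : ι → ((Fin n ⊕ Fin n) →₀ ℕ)) :
    ∏ j ∈ s, (monomial (w j) (1:ℂ) : Av n) = monomial (∑ j ∈ s, w j) 1 := by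
  classical
  induction s using Finset.cons_induction with
  | empty => simp
  | cons a s ha ih => rw [Finset.prod_cons, Finset.sum_cons, ih, monomial_mul, one_mul]

variable (n) in
/-- The substitution making the chosen Plücker coordinates into distinct monomials. -/
noncomputable def phi : Av (n+2) →ₐ[ℂ] Av (n+2) :=
  aeval (fun s => match s with
    | Sum.inl i => if i.val = 0 then 1 else if i.val = 1 then 0 else - X (Sum.inl i)
    | Sum.inr i => if i.val = 0 then 0 else X (Sum.inr i))

def emb (n : ℕ) (j : Fin n) : Fin (n+2) := ⟨j.val + 2, by omega⟩

lemma phi_q01 : phi n (q 0 1) = X (Sum.inr 1) := by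
  simp [phi, q]

lemma phi_q0 (j : Fin n) : phi n (q 0 (emb n j)) = X (Sum.inr (emb n j)) := by
  have h2 : (emb n j).val = j.val + 2 := rfl
  have h0 : emb n j ≠ 0 := Fin.ne_of_val_ne (by rw [h2]; simp)
  simp [phi, q, h2, h0]

lemma phi_q1 (j : Fin n) : phi n (q 1 (emb n j)) = X (Sum.inl (emb n j)) * X (Sum.inr 1) := by
  have h2 : (emb n j).val = j.val + 2 := rfl
  have h0 : emb n j ≠ 0 := Fin.ne_of_val_ne (by rw [h2]; simp)
  simp [phi, q, h2, h0]

/-- Index type for the independent family. -/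
abbrev kap (n E : ℕ) := Fin (E+1) × (Fin n → Fin (E+1)) × (Fin n → Fin (E+1))

/-- The exponent function of a family member. -/
def nuOf (n E : ℕ) (x : kap n E) : Fin (n+2) × Fin (n+2) → ℕ :=
  indF (0,1) x.1.val
    + ((∑ j : Fin n, indF (0, emb n j) (x.2.1 j).val)
    + (∑ j : Fin n, indF (1, emb n j) (x.2.2 j).val))

noncomputable def Hfam (n E : ℕ) (x : kap n E) : Av (n+2) := qprod (nuOf n E x)

lemma wt_nuOf (n E : ℕ) (x : kap n E) : wt (nuOf n E x) ≤ (2*n+1) * E := by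
  rw [nuOf, wt_add, wt_add, wt_sum, wt_sum, wt_indF]
  have h1 : ∑ j : Fin n, wt (indF ((0 : Fin (n+2)), emb n j) (x.2.1 j).val) ≤ n * E := by
    calc ∑ j : Fin n, wt (indF ((0 : Fin (n+2)), emb n j) (x.2.1 j).val)
        ≤ ∑ _j : Fin n, E := Finset.sum_le_sum (fun j _ => by rw [wt_indF]; omega)
      _ = n * E := by rw [Finset.sum_const, Finset.card_univ, Fintype.card_fin, smul_eq_mul]
  have h2 : ∑ j : Fin n, wt (indF ((1 : Fin (n+2)), emb n j) (x.2.2 j).val) ≤ n * E := by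
    calc ∑ j : Fin n, wt (indF ((1 : Fin (n+2)), emb n j) (x.2.2 j).val)
        ≤ ∑ _j : Fin n, E := Finset.sum_le_sum (fun j _ => by rw [wt_indF]; omega)
      _ = n * E := by rw [Finset.sum_const, Finset.card_univ, Fintype.card_fin, smul_eq_mul]
  have h0 : x.1.val ≤ E := by omega
  nlinarith

lemma Hfam_eq (n E : ℕ) (x : kap n E) :
    Hfam n E x = q 0 1 ^ x.1.val
      * ((∏ j : Fin n, q 0 (emb n j) ^ (x.2.1 j).val)
      * (∏ j : Fin n, q 1 (emb n j) ^ (x.2.2 j).val)) := by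
  have P1 : ∏ j : Fin n, qprod (indF ((0:Fin (n+2)), emb n j) (x.2.1 j).val)
      = ∏ j : Fin n, q 0 (emb n j) ^ (x.2.1 j).val :=
    Finset.prod_congr rfl fun j _ => qprod_indF _ _
  have P2 : ∏ j : Fin n, qprod (indF ((1:Fin (n+2)), emb n j) (x.2.2 j).val)
      = ∏ j : Fin n, q 1 (emb n j) ^ (x.2.2 j).val :=
    Finset.prod_congr rfl fun j _ => qprod_indF _ _
  rw [Hfam, nuOf, qprod_add, qprod_add, qprod_sum, qprod_sum, qprod_indF, P1, P2]

/-- The monomial exponent of the image under `phi`. -/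
noncomputable def muOf (n E : ℕ) (x : kap n E) : (Fin (n+2) ⊕ Fin (n+2)) →₀ ℕ :=
  Finsupp.single (Sum.inr 1) (x.1.val + ∑ j : Fin n, (x.2.2 j).val)
    + ((∑ j : Fin n, Finsupp.single (Sum.inr (emb n j)) (x.2.1 j).val)
    + (∑ j : Fin n, Finsupp.single (Sum.inl (emb n j)) (x.2.2 j).val))

lemma phi_Hfam (n E : ℕ) (x : kap n E) :
    phi n (Hfam n E x) = monomial (muOf n E x) 1 := by
  rw [Hfam_eq, map_mul, map_mul, map_pow, phi_q01, map_prod, map_prod]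
  have h0 : ∀ j : Fin n, (phi n) (q 0 (emb n j) ^ (x.2.1 j).val)
      = monomial (Finsupp.single (Sum.inr (emb n j)) (x.2.1 j).val) 1 := by
    intro j; rw [map_pow, phi_q0, X_pow_eq_monomial]
  have h1 : ∀ j : Fin n, (phi n) (q 1 (emb n j) ^ (x.2.2 j).val)
      = monomial ((Finsupp.single (Sum.inl (emb n j)) (x.2.2 j).val)
          + (Finsupp.single (Sum.inr 1) (x.2.2 j).val)) 1 := by
    intro j
    rw [map_pow, phi_q1, mul_pow, X_pow_eq_monomial, X_pow_eq_monomial, monomial_mul, one_mul]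
  rw [Finset.prod_congr rfl fun j _ => h0 j, Finset.prod_congr rfl fun j _ => h1 j,
    monomial_prod, monomial_prod, X_pow_eq_monomial, monomial_mul, monomial_mul]
  simp only [one_mul, mul_one]
  rw [muOf]
  congr 1
  rw [Finset.sum_add_distrib]
  have hsingle : (Finsupp.single (Sum.inr (1 : Fin (n+2)))
      (x.1.val + ∑ j : Fin n, (x.2.2 j).val) : (Fin (n+2) ⊕ Fin (n+2)) →₀ ℕ)
      = Finsupp.single (Sum.inr (1 : Fin (n+2))) x.1.val
        + ∑ j : Fin n, Finsupp.single (Sum.inr (1 : Fin (n+2))) (x.2.2 j).val := by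
    rw [Finsupp.single_add, Finsupp.single_finset_sum]
  rw [hsingle]
  abel

lemma emb_inj (n : ℕ) : Function.Injective (emb n) := by
  intro a b h
  have : a.val + 2 = b.val + 2 := congrArg Fin.val h
  exact Fin.ext (by omega)

lemma emb_ne_one (n : ℕ) (j : Fin n) : emb n j ≠ (1 : Fin (n+2)) := by
  intro h
  have : j.val + 2 = 1 := congrArg Fin.val h
  omega

lemma muOf_apply_inl (n E : ℕ) (x : kap n E) (j : Fin n) :
    muOf n E x (Sum.inl (emb n j)) = (x.2.2 j).val := by
  rw [muOf, Finsupp.add_apply, Finsupp.add_apply, Finsupp.finset_sum_apply,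
    Finsupp.finset_sum_apply]
  rw [Finsupp.single_apply, if_neg (by simp)]
  rw [Finset.sum_congr rfl (fun j' _ => Finsupp.single_apply (a := (Sum.inr (emb n j') : Fin (n+2) ⊕ Fin (n+2))) (b := (x.2.1 j').val) (a' := Sum.inl (emb n j)))]
  rw [Finset.sum_congr rfl (fun j' _ => Finsupp.single_apply (a := (Sum.inl (emb n j') : Fin (n+2) ⊕ Fin (n+2))) (b := (x.2.2 j').val) (a' := Sum.inl (emb n j)))]
  have h1 : ∀ j' : Fin n, (if (Sum.inr (emb n j') : Fin (n+2) ⊕ Fin (n+2)) = Sum.inl (emb n j) then (x.2.1 j').val else 0) = 0 := by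
    intro j'; rw [if_neg (by simp)]
  have h2 : ∀ j' : Fin n, (if (Sum.inl (emb n j') : Fin (n+2) ⊕ Fin (n+2)) = Sum.inl (emb n j) then (x.2.2 j').val else 0)
      = if j' = j then (x.2.2 j').val else 0 := by
    intro j'
    congr 1
    simp only [Sum.inl.injEq, eq_iff_iff]
    exact ⟨fun h => emb_inj n h, fun h => by rw [h]⟩
  rw [Finset.sum_congr rfl (fun j' _ => h1 j'), Finset.sum_congr rfl (fun j' _ => h2 j'),
    Finset.sum_const_zero, Finset.sum_ite_eq' Finset.univ j, if_pos (Finset.mem_univ _)]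
  omega

lemma muOf_apply_inr_emb (n E : ℕ) (x : kap n E) (j : Fin n) :
    muOf n E x (Sum.inr (emb n j)) = (x.2.1 j).val := by
  rw [muOf, Finsupp.add_apply, Finsupp.add_apply, Finsupp.finset_sum_apply,
    Finsupp.finset_sum_apply]
  rw [Finsupp.single_apply, if_neg (by simp [(emb_ne_one n j).symm])]
  rw [Finset.sum_congr rfl (fun j' _ => Finsupp.single_apply (a := (Sum.inr (emb n j') : Fin (n+2) ⊕ Fin (n+2))) (b := (x.2.1 j').val) (a' := Sum.inr (emb n j)))]
  rw [Finset.sum_congr rfl (fun j' _ => Finsupp.single_apply (a := (Sum.inl (emb n j') : Fin (n+2) ⊕ Fin (n+2))) (b := (x.2.2 j').val) (a' := Sum.inr (emb n j)))]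
  have h1 : ∀ j' : Fin n, (if (Sum.inl (emb n j') : Fin (n+2) ⊕ Fin (n+2)) = Sum.inr (emb n j) then (x.2.2 j').val else 0) = 0 := by
    intro j'; rw [if_neg (by simp)]
  have h2 : ∀ j' : Fin n, (if (Sum.inr (emb n j') : Fin (n+2) ⊕ Fin (n+2)) = Sum.inr (emb n j) then (x.2.1 j').val else 0)
      = if j' = j then (x.2.1 j').val else 0 := by
    intro j'
    congr 1
    simp only [Sum.inr.injEq, eq_iff_iff]
    exact ⟨fun h => emb_inj n h, fun h => by rw [h]⟩
  rw [Finset.sum_congr rfl (fun j' _ => h1 j'), Finset.sum_congr rfl (fun j' _ => h2 j'),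
    Finset.sum_const_zero, Finset.sum_ite_eq' Finset.univ j, if_pos (Finset.mem_univ _)]
  omega

lemma muOf_apply_inr_one (n E : ℕ) (x : kap n E) :
    muOf n E x (Sum.inr (1 : Fin (n+2))) = x.1.val + ∑ j : Fin n, (x.2.2 j).val := by
  rw [muOf, Finsupp.add_apply, Finsupp.add_apply, Finsupp.finset_sum_apply,
    Finsupp.finset_sum_apply]
  rw [Finsupp.single_apply, if_pos rfl]
  have h1 : ∀ j' : Fin n, (Finsupp.single (Sum.inr (emb n j') : Fin (n+2) ⊕ Fin (n+2)) (x.2.1 j').val) (Sum.inr (1 : Fin (n+2))) = 0 := by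
    intro j'
    rw [Finsupp.single_apply, if_neg (by simp [emb_ne_one n j'])]
  have h2 : ∀ j' : Fin n, (Finsupp.single (Sum.inl (emb n j') : Fin (n+2) ⊕ Fin (n+2)) (x.2.2 j').val) (Sum.inr (1 : Fin (n+2))) = 0 := by
    intro j'
    rw [Finsupp.single_apply, if_neg (by simp)]
  rw [Finset.sum_congr rfl (fun j' _ => h1 j'), Finset.sum_congr rfl (fun j' _ => h2 j')]
  simp

lemma muOf_inj (n E : ℕ) : Function.Injective (muOf n E) := by
  intro x y h
  have hc : ∀ j : Fin n, x.2.2 j = y.2.2 j := by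
    intro j
    have := DFunLike.congr_fun h (Sum.inl (emb n j))
    rw [muOf_apply_inl, muOf_apply_inl] at this
    exact Fin.ext this
  have hb : ∀ j : Fin n, x.2.1 j = y.2.1 j := by
    intro j
    have := DFunLike.congr_fun h (Sum.inr (emb n j))
    rw [muOf_apply_inr_emb, muOf_apply_inr_emb] at this
    exact Fin.ext this
  have ha : x.1 = y.1 := by
    have := DFunLike.congr_fun h (Sum.inr (1 : Fin (n+2)))
    rw [muOf_apply_inr_one, muOf_apply_inr_one] at this
    have hsum : ∑ j : Fin n, (x.2.2 j).val = ∑ j : Fin n, (y.2.2 j).val :=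
      Finset.sum_congr rfl fun j _ => by rw [hc j]
    apply Fin.ext
    omega
  exact Prod.ext ha (Prod.ext (funext hb) (funext hc))

lemma Hfam_li (n E : ℕ) : LinearIndependent ℂ (Hfam n E) := by
  apply LinearIndependent.of_comp (phi n).toLinearMap
  have heq : ⇑(phi n).toLinearMap ∘ Hfam n E = fun x => monomial (muOf n E x) (1:ℂ) :=
    funext fun x => by rw [Function.comp_apply, AlgHom.toLinearMap_apply, phi_Hfam]
  rw [heq]
  have hb := (basisMonomials (Fin (n+2) ⊕ Fin (n+2)) ℂ).linearIndependent
  have h2 := hb.comp (muOf n E) (muOf_inj n E)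
  have h3 : ⇑(basisMonomials (Fin (n+2) ⊕ Fin (n+2)) ℂ) ∘ muOf n E
      = fun x => monomial (muOf n E x) (1:ℂ) := by
    funext x
    simp [coe_basisMonomials]
  rwa [h3] at h2

lemma card_kap (n E : ℕ) : Fintype.card (kap n E) = (E+1)^(2*n+1) := by
  simp only [Fintype.card_prod, Fintype.card_fun, Fintype.card_fin]
  rw [show 2*n+1 = 1 + (n + n) by omega, pow_add, pow_add, pow_one]

lemma main_aux (n m : ℕ) (hm : m ≤ 2*n)
    (c : Fin m → Fin (n+2) → Fin (n+2) → ℂ)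
    (hc : ∀ k i j, c k j i = - c k i j)
    (hng : ∀ s t : Fin (n+2) → ℂ,
      (∀ k, ∑ ij : Fin (n+2) × Fin (n+2), c k ij.1 ij.2 * (s ij.1 * t ij.2) = 0) →
      ∀ i j, s i * t j - s j * t i = 0) : False := by
  classical
  obtain ⟨M, key⟩ := key_identity c hc hng
  set K := (M+1) ^ ((n+2)*(n+2)) with hK
  set E := K * (2*n+1)^(2*n) with hE
  set D := (2*n+1) * E with hD
  have hqspan := qprod_mem_span c (M+1) M rfl key
  have hmem : ∀ x : kap n E, Hfam n E x ∈ Submodule.span ℂ (Ugens c (M+1) D) := by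
    intro x
    exact hqspan D (nuOf n E x) (by rw [hD]; exact wt_nuOf n E x)
  let GF : Finset (Av (n+2)) := Finset.image
    (fun gb : (Fin m → Fin (D+1)) × (Fin (n+2) × Fin (n+2) → Fin (M+1)) =>
      pprod c (fun k => (gb.1 k).val) * qprod (fun ij => (gb.2 ij).val)) Finset.univ
  have hsub : Ugens c (M+1) D ⊆ ↑GF := by
    rintro x ⟨γ, β, hβ, hwt, rfl⟩
    apply Finset.mem_coe.mpr
    apply Finset.mem_image.mpr
    have hγ : ∀ k, γ k < D + 1 := by
      intro k
      have h1 : γ k ≤ wt γ := Finset.single_le_sum (f := γ) (fun _ _ => Nat.zero_le _)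
        (Finset.mem_univ k)
      omega
    refine ⟨(fun k => ⟨γ k, hγ k⟩, fun ij => ⟨β ij, hβ ij⟩), Finset.mem_univ _, rfl⟩
  have hspan_le : Submodule.span ℂ (Ugens c (M+1) D)
      ≤ Submodule.span ℂ (↑GF : Set (Av (n+2))) := Submodule.span_mono hsub
  haveI : Module.Finite ℂ ↥(Submodule.span ℂ (↑GF : Set (Av (n+2)))) :=
    Module.Finite.span_of_finite ℂ GF.finite_toSet
  have hcard : Fintype.card (kap n E) ≤ GF.card := by
    let f : kap n E → ↥(Submodule.span ℂ (↑GF : Set (Av (n+2)))) :=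
      fun x => ⟨Hfam n E x, hspan_le (hmem x)⟩
    have hfi : LinearIndependent ℂ f := by
      apply LinearIndependent.of_comp (Submodule.span ℂ (↑GF : Set (Av (n+2)))).subtype
      have : ⇑(Submodule.span ℂ (↑GF : Set (Av (n+2)))).subtype ∘ f = Hfam n E := rfl
      rw [this]
      exact Hfam_li n E
    have h1 := LinearIndependent.fintype_card_le_finrank (R := ℂ) hfi
    have h2 : Module.finrank ℂ ↥(Submodule.span ℂ (↑GF : Set (Av (n+2)))) ≤ GF.card := by
      have := finrank_span_finset_le_card (R := ℂ) (M := Av (n+2)) GF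
      rwa [Set.finrank] at this
    omega
  have hc1 : Fintype.card (kap n E) = (E+1)^(2*n+1) := card_kap n E
  have hc2 : GF.card ≤ (D+1)^m * K := by
    calc GF.card ≤ Fintype.card ((Fin m → Fin (D+1)) × (Fin (n+2) × Fin (n+2) → Fin (M+1))) :=
          le_trans Finset.card_image_le (by rw [Finset.card_univ])
      _ = (D+1)^m * K := by
          rw [hK]
          simp only [Fintype.card_prod, Fintype.card_fun, Fintype.card_fin, Fintype.card_prod]
  -- numeric contradiction
  have hK1 : 1 ≤ K := Nat.one_le_pow _ _ (by omega)
  have step1 : (E+1)^(2*n+1) ≤ (D+1)^m * K := by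
    rw [← hc1]
    exact le_trans hcard hc2
  have hD1 : D + 1 ≤ (2*n+1) * (E+1) := by
    rw [hD, Nat.mul_succ]
    omega
  have step2 : (D+1)^m ≤ (2*n+1)^m * (E+1)^m := by
    calc (D+1)^m ≤ ((2*n+1) * (E+1))^m := Nat.pow_le_pow_left hD1 m
      _ = (2*n+1)^m * (E+1)^m := mul_pow _ _ _
  have step4 : (2*n+1)^m ≤ (2*n+1)^(2*n) := Nat.pow_le_pow_right (by omega) hm
  have step5 : (E+1)^m ≤ (E+1)^(2*n) := Nat.pow_le_pow_right (by omega) hm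
  have step6 : (E+1)^(2*n+1) ≤ (E+1)^(2*n) * ((2*n+1)^(2*n) * K) := by
    calc (E+1)^(2*n+1) ≤ (D+1)^m * K := step1
      _ ≤ ((2*n+1)^m * (E+1)^m) * K := Nat.mul_le_mul_right K step2
      _ ≤ ((2*n+1)^(2*n) * (E+1)^(2*n)) * K :=
          Nat.mul_le_mul_right K (Nat.mul_le_mul step4 step5)
      _ = (E+1)^(2*n) * ((2*n+1)^(2*n) * K) := by ring
  have step7 : E + 1 ≤ (2*n+1)^(2*n) * K := by
    have hpos : 0 < (E+1)^(2*n) := Nat.pow_pos (by omega)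
    have : (E+1)^(2*n) * (E+1) ≤ (E+1)^(2*n) * ((2*n+1)^(2*n) * K) := by
      rw [← pow_succ]
      exact step6
    exact Nat.le_of_mul_le_mul_left this hpos
  have hcomm : K * (2*n+1)^(2*n) = (2*n+1)^(2*n) * K := Nat.mul_comm _ _
  omega

end Stmt4

/-- Grassmannian argument: if `2 dim W ≥ dim U + 4`, every alternating bilinear
map `B : W × W → U` vanishes on some pair of linearly independent vectors. -/
theorem stmt_4 (W U : Type*) [AddCommGroup W] [Module ℂ W] [FiniteDimensional ℂ W]
    [AddCommGroup U] [Module ℂ U] [FiniteDimensional ℂ U]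
    (hdim : 2 * Module.finrank ℂ W ≥ Module.finrank ℂ U + 4)
    (B : W →ₗ[ℂ] W →ₗ[ℂ] U) (halt : ∀ w : W, B w w = 0) :
    ∃ s₁ s₂ : W, LinearIndependent ℂ ![s₁, s₂] ∧ B s₁ s₂ = 0 := by
  
  classical
  by_contra hcon
  push_neg at hcon
  obtain ⟨n, hn⟩ : ∃ n, Module.finrank ℂ W = n + 2 := ⟨Module.finrank ℂ W - 2, by omega⟩
  set mU := Module.finrank ℂ U with hmU
  have hm : mU ≤ 2*n := by omega
  let bW : Module.Basis (Fin (n+2)) ℂ W := (Module.finBasis ℂ W).reindex (finCongr hn)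
  let bU : Module.Basis (Fin mU) ℂ U := Module.finBasis ℂ U
  set c : Fin mU → Fin (n+2) → Fin (n+2) → ℂ :=
    fun k i j => bU.repr (B (bW i) (bW j)) k with hcdef
  have hBalt : ∀ x y : W, B x y = - B y x := by
    intro x y
    have h := halt (x + y)
    simp only [map_add, LinearMap.add_apply, halt x, halt y, zero_add, add_zero] at h
    first
    | exact eq_neg_of_add_eq_zero_left h
    | exact eq_neg_of_add_eq_zero_right h
  have hc : ∀ k i j, c k j i = - c k i j := by
    intro k i j
    rw [hcdef]
    simp only
    rw [hBalt (bW j) (bW i), map_neg, Finsupp.neg_apply]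
  have hBsum : ∀ s t : Fin (n+2) → ℂ,
      B (∑ i, s i • bW i) (∑ j, t j • bW j)
        = ∑ ij : Fin (n+2) × Fin (n+2), (s ij.1 * t ij.2) • B (bW ij.1) (bW ij.2) := by
    intro s t
    have houter : B (∑ i, s i • bW i) = ∑ i, s i • B (bW i) := by
      rw [map_sum]
      exact Finset.sum_congr rfl fun i _ => map_smul _ _ _
    rw [houter, LinearMap.sum_apply, Fintype.sum_prod_type]
    refine Finset.sum_congr rfl fun i _ => ?_
    rw [LinearMap.smul_apply, map_sum, Finset.smul_sum]
    refine Finset.sum_congr rfl fun j _ => ?_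
    rw [map_smul, smul_smul]
  have hng : ∀ s t : Fin (n+2) → ℂ,
      (∀ k, ∑ ij : Fin (n+2) × Fin (n+2), c k ij.1 ij.2 * (s ij.1 * t ij.2) = 0) →
      ∀ i j, s i * t j - s j * t i = 0 := by
    intro s t hsum i j
    set sv := ∑ i, s i • bW i with hsv
    set tv := ∑ j, t j • bW j with htv
    have hBzero : B sv tv = 0 := by
      have h1 : bU.repr (B sv tv) = 0 := by
        ext k
        rw [hsv, htv, hBsum s t]
        simp only [map_sum, Finsupp.finset_sum_apply]
        have he : ∀ ij : Fin (n+2) × Fin (n+2),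
            (bU.repr ((s ij.1 * t ij.2) • B (bW ij.1) (bW ij.2))) k
              = c k ij.1 ij.2 * (s ij.1 * t ij.2) := by
          intro ij
          rw [map_smul, Finsupp.smul_apply, smul_eq_mul, hcdef]
          ring
        rw [Finset.sum_congr rfl fun ij _ => he ij, hsum k]
        simp
      exact (LinearEquiv.map_eq_zero_iff bU.repr).mp h1
    have hdep : ¬ LinearIndependent ℂ ![sv, tv] := fun hind => hcon sv tv hind hBzero
    rw [LinearIndependent.pair_iff] at hdep
    push_neg at hdep
    obtain ⟨a, b, hab, hne⟩ := hdep
    have hco : ∀ i0 : Fin (n+2), a * s i0 + b * t i0 = 0 := by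
      intro i0
      have h2 : a • sv + b • tv = ∑ i, (a * s i + b * t i) • bW i := by
        rw [hsv, htv, Finset.smul_sum, Finset.smul_sum, ← Finset.sum_add_distrib]
        exact Finset.sum_congr rfl fun i _ => by rw [smul_smul, smul_smul, ← add_smul]
      rw [h2] at hab
      have h3 := bW.repr_sum_self (fun i => a * s i + b * t i)
      rw [hab] at h3
      have := congrFun h3.symm i0
      simpa using this
    by_cases ha : a = 0
    · have hb := hne ha
      have hgoal : b * (s i * t j - s j * t i) = 0 := by
        linear_combination s i * hco j - s j * hco i
      rcases mul_eq_zero.mp hgoal with h | h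
      · exact absurd h hb
      · exact h
    · have hgoal : a * (s i * t j - s j * t i) = 0 := by
        linear_combination t j * hco i - t i * hco j
      rcases mul_eq_zero.mp hgoal with h | h
      · exact absurd h ha
      · exact h
  exact Stmt4.main_aux n mU hm c hc hng
end

section
/- Let g ≥ 2 and let M be the free ℤ-module with basis a₁, …, a_g, b₁, …, b_g equipped with the alternating ℤ-bilinear form ω determined by ω(aᵢ, bⱼ) = δᵢⱼ and ω(aᵢ, aⱼ) = ω(bᵢ, bⱼ) = 0. Let χ : M → M be a ℤ-linear map and m an integer with ω(χ(x), χ(y)) = m·ω(x, y) for all x, y ∈ M. Suppose there are integers l, n with n ≠ 0, integers s₂, …, s_g and t₁, …, t_g such that χ(a₁) = l·a₁, χ(aᵢ) = n·aᵢ + sᵢ·a₁ for 2 ≤ i ≤ g, and χ(bᵢ) = n·bᵢ + tᵢ·a₁ for 1 ≤ i ≤ g. Then m = n², l = n, and sᵢ = 0 and tᵢ = 0 for all 2 ≤ i ≤ g. -/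
/-- Symplectic-lattice computation of Section 6: on the symplectic ℤ-lattice of
rank `2g` (`g ≥ 2`) with symplectic basis `a₁,…,a_g,b₁,…,b_g`, a linear map `χ`
multiplying the symplectic form by `m` and satisfying `χ(a₁) = l·a₁`,
`χ(aᵢ) = n·aᵢ + sᵢ·a₁` (`i ≥ 2`), `χ(bᵢ) = n·bᵢ + tᵢ·a₁`, with `n ≠ 0`, must
have `m = n²`, `l = n`, and `sᵢ = tᵢ = 0` for `i ≥ 2`. -/
theorem stmt_8 (g : ℕ) (hg : 2 ≤ g)
    (M : Type*) [AddCommGroup M] [Module ℤ M]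
    (B : Module.Basis (Fin g ⊕ Fin g) ℤ M)
    (a b : Fin g → M)
    (ha : ∀ i, a i = B (Sum.inl i)) (hb : ∀ i, b i = B (Sum.inr i))
    (ω : M →ₗ[ℤ] M →ₗ[ℤ] ℤ)
    (hab : ∀ i j, ω (a i) (b j) = if i = j then 1 else 0)
    (haa : ∀ i j, ω (a i) (a j) = 0)
    (hbb : ∀ i j, ω (b i) (b j) = 0)
    (halt : ∀ z : M, ω z z = 0)
    (χ : M →ₗ[ℤ] M) (m l n : ℤ) (hn : n ≠ 0)
    (hsymp : ∀ z w : M, ω (χ z) (χ w) = m * ω z w)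
    (s t : Fin g → ℤ)
    (ha1 : χ (a ⟨0, by omega⟩) = l • a ⟨0, by omega⟩)
    (hai : ∀ i : Fin g, i ≠ ⟨0, by omega⟩ →
      χ (a i) = n • a i + s i • a ⟨0, by omega⟩)
    (hbi : ∀ i : Fin g, χ (b i) = n • b i + t i • a ⟨0, by omega⟩) :
    m = n ^ 2 ∧ l = n ∧
      ∀ i : Fin g, i ≠ (⟨0, by omega⟩ : Fin g) → s i = 0 ∧ t i = 0 := by
  have z0 : Fin g := ⟨0, by omega⟩
  have hskew : ∀ x y : M, ω y x = - ω x y := by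
    intro x y
    have h := halt (x + y)
    simp only [map_add, LinearMap.add_apply, halt] at h
    linarith
  set i0 : Fin g := ⟨0, by omega⟩ with hi0
  set i1 : Fin g := ⟨1, by omega⟩ with hi1
  have h10 : i1 ≠ i0 := by simp [hi0, hi1, Fin.ext_iff]
  -- m = n^2
  have hm : m = n ^ 2 := by
    have h := hsymp (a i1) (b i1)
    rw [hai i1 h10, hbi i1] at h
    simp [hab, haa, hbb, h10, Ne.symm h10] at h
    ring_nf at h ⊢
    linarith
  -- l = n
  have hl : l = n := by
    have h := hsymp (a i0) (b i0)
    rw [ha1, hbi i0] at h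
    simp [hab, haa, hbb] at h
    rw [hm] at h
    have : l * n = n * n := by ring_nf at h ⊢; linarith
    have := mul_right_cancel₀ hn this
    exact this
  refine ⟨hm, hl, fun i hi => ?_⟩
  have hs : s i = 0 := by
    have h := hsymp (a i) (b i0)
    rw [hai i hi, hbi i0] at h
    simp [hab, haa, hbb, hi] at h
    rcases h with h | h
    · exact h
    · exact absurd h hn
  have ht : t i = 0 := by
    have h := hsymp (b i) (b i0)
    rw [hbi i, hbi i0] at h
    have hba : ∀ j k, ω (b j) (a k) = - ω (a k) (b j) := fun j k => hskew _ _
    simp [hab, haa, hbb, hba, Ne.symm hi] at h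
    rcases h with h | h
    · exact h
    · exact absurd h hn
  exact ⟨hs, ht⟩
end
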